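/- arXiv:1809.09391 — 6 statements merged into one kernel-verified Lean document; each statement's English description precedes it below -/
import Mathlib

section
/- Let g^ε = (g^ε_0, g^ε_1) : U → ℂ² be a family of nonconstant holomorphic maps on a connected open neighbourhood U of 0 ∈ ℂ, depending continuously on a real parameter ε near 0, with (g^0)'(0) = (0,0). If the maps h^ε = [-(g^ε_1)' : (g^ε_0)'] : U → ℂℙ¹ depend continuously on ε (as maps to ℂℙ¹), then for every ε sufficiently close to 0 there exists z_ε ∈ U close to 0 with (g^ε)'(z_ε) = (0,0). -/
open Filter Topology
open scoped LinearAlgebra.Projectivization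

/-- The quotient topology on a projectivization. -/
noncomputable instance projTop (K V : Type*) [DivisionRing K] [AddCommGroup V] [Module K V]
    [TopologicalSpace V] : TopologicalSpace (ℙ K V) :=
  inferInstanceAs (TopologicalSpace (Quotient (projectivizationSetoid K V)))


lemma rep_coord_ne (i : Fin 2) (w : Fin 2 → ℂ) (hw : w ≠ 0) :
    (Projectivization.mk ℂ w hw).rep i ≠ 0 ↔ w i ≠ 0 := by
  obtain ⟨a, ha⟩ := Projectivization.exists_smul_eq_mk_rep ℂ w hw
  rw [← ha]
  simp [Units.smul_def]

lemma isOpen_coord (i : Fin 2) : IsOpen {P : ℙ ℂ (Fin 2 → ℂ) | P.rep i ≠ 0} := by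
  letI S := projectivizationSetoid ℂ (Fin 2 → ℂ)
  have h : IsOpen (@Quotient.mk' _ S ⁻¹' {P : ℙ ℂ (Fin 2 → ℂ) | P.rep i ≠ 0}) := by
    have he : (@Quotient.mk' _ S ⁻¹' {P : ℙ ℂ (Fin 2 → ℂ) | P.rep i ≠ 0})
        = {v : {v : Fin 2 → ℂ // v ≠ 0} | v.1 i ≠ 0} := by
      ext v
      exact rep_coord_ne i v.1 v.2
    rw [he]
    exact isOpen_compl_singleton.preimage ((continuous_apply i).comp continuous_subtype_val)
  exact (@isQuotientMap_quotient_mk' _ _ S).isOpen_preimage.1 h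

lemma key (U : Set ℂ) (hU : IsOpen U) (hUc : IsConnected U) (h0U : (0:ℂ) ∈ U)
    (a b : ℝ → ℂ → ℂ)
    (ha : ∀ ε, DifferentiableOn ℂ (a ε) U) (hb : DifferentiableOn ℂ (b 0) U)
    (hnc0 : ¬ ∃ c : ℂ × ℂ, ∀ z ∈ U, (a 0 z, b 0 z) = c)
    (hlu : TendstoLocallyUniformlyOn (fun ε => a ε) (a 0) (𝓝 0) U)
    (ha0 : deriv (a 0) 0 = 0)
    (I : Set ℝ) (B : Set ℂ) (hI : I ∈ 𝓝 (0:ℝ)) (hB : B ∈ 𝓝 (0:ℂ))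
    (himp : ∀ ε ∈ I, ∀ z ∈ B ∩ U, deriv (a ε) z = 0 → deriv (b ε) z = 0)
    {δ : ℝ} (hδ : 0 < δ) :
    ∀ᶠ ε in 𝓝 (0:ℝ), ∃ z ∈ U, ‖z‖ < δ ∧ deriv (a ε) z = 0 ∧ deriv (b ε) z = 0 := by
  have hAa : ∀ ε, AnalyticOnNhd ℂ (deriv (a ε)) U := fun ε => ((ha ε).analyticOnNhd hU).deriv
  rcases (hAa 0 0 h0U).eventually_eq_zero_or_eventually_ne_zero with hz | hz
  · exfalso
    obtain ⟨t, ht0, htsub⟩ :=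
      Metric.mem_nhds_iff.1 (Filter.inter_mem hz (Filter.inter_mem hB (hU.mem_nhds h0U)))
    have hball : Metric.ball (0:ℂ) t ⊆ U := fun z hz => (htsub hz).2.2
    have step : ∀ f : ℂ → ℂ, DifferentiableOn ℂ f U →
        (∀ z ∈ Metric.ball (0:ℂ) t, deriv f z = 0) → ∀ z ∈ U, f z = f 0 := by
      intro f hf hf'
      have hconst : ∀ z ∈ Metric.ball (0:ℂ) t, f z = f 0 := by
        intro z hz
        refine (convex_ball 0 t).is_const_of_fderivWithin_eq_zero
          (hf.mono hball) ?_ hz (Metric.mem_ball_self ht0)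
        intro x hx
        have hd : DifferentiableAt ℂ f x := hf.differentiableAt (hU.mem_nhds (hball hx))
        have h1 : HasDerivAt f 0 x := by rw [← hf' x hx]; exact hd.hasDerivAt
        rw [fderivWithin_of_isOpen Metric.isOpen_ball hx, h1.hasFDerivAt.fderiv]
        exact ContinuousLinearMap.ext fun y => by simp
      have hfa : AnalyticOnNhd ℂ (fun z => f z - f 0) U :=
        (hf.analyticOnNhd hU).sub analyticOnNhd_const
      have hev : (fun z => f z - f 0) =ᶠ[𝓝 (0:ℂ)] 0 := by
        filter_upwards [Metric.ball_mem_nhds (0:ℂ) ht0] with z hz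
        simp [hconst z hz]
      have := hfa.eqOn_zero_of_preconnected_of_eventuallyEq_zero hUc.isPreconnected h0U hev
      intro z hzU
      have h2 := this hzU
      simpa [sub_eq_zero] using h2
    have haz : ∀ z ∈ Metric.ball (0:ℂ) t, deriv (a 0) z = 0 := fun z hz => (htsub hz).1
    have hbz : ∀ z ∈ Metric.ball (0:ℂ) t, deriv (b 0) z = 0 := fun z hz =>
      himp 0 (mem_of_mem_nhds hI) z ⟨(htsub hz).2.1, (htsub hz).2.2⟩ ((htsub hz).1)
    exact hnc0 ⟨(a 0 0, b 0 0), fun z hzU => by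
      rw [step (a 0) (ha 0) haz z hzU, step (b 0) hb hbz z hzU]⟩
  · rw [eventually_nhdsWithin_iff] at hz
    obtain ⟨t, ht0, htsub⟩ :=
      Metric.mem_nhds_iff.1 (Filter.inter_mem hz (Filter.inter_mem hB (hU.mem_nhds h0U)))
    set r : ℝ := min (t/2) (δ/2) with hr
    have hr0 : 0 < r := lt_min (by linarith) (by linarith)
    have hrδ : r < δ := lt_of_le_of_lt (min_le_right _ _) (by linarith)
    have hKt : Metric.closedBall (0:ℂ) r ⊆ Metric.ball (0:ℂ) t :=
      Metric.closedBall_subset_ball (lt_of_le_of_lt (min_le_left _ _) (by linarith))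
    have hKU : Metric.closedBall (0:ℂ) r ⊆ U := fun z hz => (htsub (hKt hz)).2.2
    have hKB : Metric.closedBall (0:ℂ) r ⊆ B := fun z hz => (htsub (hKt hz)).2.1
    have hsph : ∀ z ∈ Metric.sphere (0:ℂ) r, deriv (a 0) z ≠ 0 := by
      intro z hzs
      have hzne : z ≠ 0 := by
        intro h
        rw [Metric.mem_sphere, h, dist_self] at hzs
        exact hr0.ne' hzs.symm
      exact (htsub (hKt (Metric.sphere_subset_closedBall hzs))).1 (Set.mem_compl_singleton_iff.2 hzne)
    obtain ⟨zm, hzm, hmin⟩ := (isCompact_sphere (0:ℂ) r).exists_isMinOn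
      (NormedSpace.sphere_nonempty.2 hr0.le)
      (((hAa 0).continuousOn.mono (Metric.sphere_subset_closedBall.trans hKU)).norm)
    set m : ℝ := ‖deriv (a 0) zm‖ with hmdef
    have hm : 0 < m := norm_pos_iff.2 (hsph zm hzm)
    have hlud : TendstoLocallyUniformlyOn (fun ε => deriv (a ε)) (deriv (a 0)) (𝓝 0) U :=
      hlu.deriv (Eventually.of_forall ha) hU
    have hKuni := (tendstoLocallyUniformlyOn_iff_forall_isCompact hU).1 hlud
      (Metric.closedBall (0:ℂ) r) hKU (isCompact_closedBall 0 r)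
    have hev := (Metric.tendstoUniformlyOn_iff.1 hKuni) (m/2) (by positivity)
    filter_upwards [hev, hI] with ε hε hεI
    have hex : ∃ z ∈ Metric.closedBall (0:ℂ) r, deriv (a ε) z = 0 := by
      by_contra hne
      push_neg at hne
      have hdc : DiffContOnCl ℂ (fun z => (deriv (a ε) z)⁻¹) (Metric.ball 0 r) := by
        constructor
        · exact ((hAa ε).differentiableOn.mono (Metric.ball_subset_closedBall.trans hKU)).inv
            (fun z hz => hne z (Metric.ball_subset_closedBall hz))
        · rw [closure_ball (0:ℂ) hr0.ne']
          exact ((hAa ε).continuousOn.mono hKU).inv₀ hne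
      have hbound : ∀ z ∈ frontier (Metric.ball (0:ℂ) r), ‖(deriv (a ε) z)⁻¹‖ ≤ (m/2)⁻¹ := by
        rw [frontier_ball (0:ℂ) hr0.ne']
        intro z hzs
        have h1 : m ≤ ‖deriv (a 0) z‖ := hmin hzs
        have h2 : dist (deriv (a 0) z) (deriv (a ε) z) < m/2 :=
          hε z (Metric.sphere_subset_closedBall hzs)
        rw [dist_eq_norm] at h2
        have h3 : m/2 ≤ ‖deriv (a ε) z‖ := by
          have h4 := norm_sub_norm_le (deriv (a 0) z) (deriv (a ε) z)
          linarith
        rw [norm_inv]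
        gcongr
      have h0cl : (0:ℂ) ∈ closure (Metric.ball (0:ℂ) r) :=
        subset_closure (Metric.mem_ball_self hr0)
      have hmain := Complex.norm_le_of_forall_mem_frontier_norm_le
        Metric.isBounded_ball hdc hbound h0cl
      have hne0 : deriv (a ε) 0 ≠ 0 := hne 0 (Metric.mem_closedBall_self hr0.le)
      rw [norm_inv] at hmain
      have h4 : m/2 ≤ ‖deriv (a ε) 0‖ := by
        rw [inv_le_inv₀ (norm_pos_iff.2 hne0) (by positivity)] at hmain
        exact hmain
      have h5 := hε 0 (Metric.mem_closedBall_self hr0.le)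
      rw [ha0, dist_eq_norm, zero_sub, norm_neg] at h5
      linarith
    obtain ⟨z, hzK, hza⟩ := hex
    refine ⟨z, hKU hzK, ?_, hza, himp ε hεI z ⟨hKB hzK, hKU hzK⟩ hza⟩
    have : ‖z‖ ≤ r := by simpa [dist_eq_norm] using hzK
    linarith

/-- stability of critical points.  Let `g^ε = (g₀^ε, g₁^ε) : U → ℂ²` be a
family of nonconstant holomorphic maps on a connected open neighbourhood `U` of `0`,
jointly continuous in `(ε, z)`, with `(g⁰)'(0) = (0,0)`.  If the projectivized
derivatives `h^ε = [-(g₁^ε)' : (g₀^ε)']` extend to a map `H` into `ℂℙ¹` that is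
(jointly) continuous, then for every `ε` sufficiently close to `0` there is a point
`z_ε ∈ U` arbitrarily close to `0` with `(g^ε)'(z_ε) = (0,0)`. -/
theorem critical_points_stable (U : Set ℂ) (hU : IsOpen U) (hUc : IsConnected U)
    (h0U : (0 : ℂ) ∈ U) (g0 g1 : ℝ → ℂ → ℂ)
    (hol0 : ∀ ε : ℝ, DifferentiableOn ℂ (g0 ε) U)
    (hol1 : ∀ ε : ℝ, DifferentiableOn ℂ (g1 ε) U)
    (hnc : ∀ ε : ℝ, ¬ ∃ c : ℂ × ℂ, ∀ z ∈ U, (g0 ε z, g1 ε z) = c)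
    (hcont : ContinuousOn (fun p : ℝ × ℂ => (g0 p.1 p.2, g1 p.1 p.2))
      (Set.univ ×ˢ U))
    (hcrit : deriv (g0 0) 0 = 0 ∧ deriv (g1 0) 0 = 0)
    (H : ℝ → ℂ → ℙ ℂ (Fin 2 → ℂ))
    (hHcont : ContinuousOn (fun p : ℝ × ℂ => H p.1 p.2) (Set.univ ×ˢ U))
    (hHeq : ∀ (ε : ℝ), ∀ z ∈ U,
      ∀ hne : (![-(deriv (g1 ε) z), deriv (g0 ε) z] : Fin 2 → ℂ) ≠ 0,
      H ε z = Projectivization.mk ℂ _ hne) :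
    ∀ δ > 0, ∀ᶠ ε in 𝓝 (0 : ℝ), ∃ z ∈ U, ‖z‖ < δ ∧
      deriv (g0 ε) z = 0 ∧ deriv (g1 ε) z = 0 := by
  intro δ hδ
  -- locally uniform convergence of each family
  have hTLU : ∀ g : ℝ → ℂ → ℂ, ContinuousOn (fun p : ℝ × ℂ => g p.1 p.2) (Set.univ ×ˢ U) →
      TendstoLocallyUniformlyOn (fun ε => g ε) (g 0) (𝓝 0) U := by
    intro g hg
    rw [tendstoLocallyUniformlyOn_iff_forall_isCompact hU]
    intro K hKU hK
    have hc : ContinuousOn (fun p : ℝ × ℂ => g p.1 p.2) (Set.Icc (-1:ℝ) 1 ×ˢ K) :=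
      hg.mono (Set.prod_mono (Set.subset_univ _) hKU)
    have huc : UniformContinuousOn (fun p : ℝ × ℂ => g p.1 p.2) (Set.Icc (-1:ℝ) 1 ×ˢ K) :=
      (isCompact_Icc.prod hK).uniformContinuousOn_of_continuous hc
    have hmem : (0:ℝ) ∈ Set.Icc (-1:ℝ) 1 := by norm_num
    have h := huc.tendstoUniformlyOn (F := g) hmem
    rwa [nhdsWithin_eq_nhds.2 (Icc_mem_nhds (by norm_num) (by norm_num))] at h
  -- the chart index
  obtain ⟨i, hi⟩ : ∃ i, (H 0 0).rep i ≠ 0 := by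
    by_contra hno
    push_neg at hno
    exact (H 0 0).rep_nonzero (funext fun j => hno j)
  have hc00 : ContinuousWithinAt (fun p : ℝ × ℂ => H p.1 p.2) (Set.univ ×ˢ U) (0,0) :=
    hHcont (0,0) ⟨Set.mem_univ _, h0U⟩
  have hpre : (fun p : ℝ × ℂ => H p.1 p.2) ⁻¹' {P : ℙ ℂ (Fin 2 → ℂ) | P.rep i ≠ 0}
      ∈ 𝓝[Set.univ ×ˢ U] ((0:ℝ),(0:ℂ)) :=
    hc00.preimage_mem_nhdsWithin ((isOpen_coord i).mem_nhds hi)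
  have hUnn : (Set.univ ×ˢ U : Set (ℝ × ℂ)) ∈ 𝓝 ((0:ℝ),(0:ℂ)) :=
    (isOpen_univ.prod hU).mem_nhds ⟨trivial, h0U⟩
  rw [nhdsWithin_eq_nhds.2 hUnn] at hpre
  obtain ⟨I', hI', B', hB', hIB⟩ := mem_nhds_prod_iff.1 (Filter.inter_mem hpre hUnn)
  fin_cases i
  · -- i = 0 : use a := g1, b := g0
    have himp : ∀ ε ∈ I', ∀ z ∈ B' ∩ U, deriv (g1 ε) z = 0 → deriv (g0 ε) z = 0 := by
      intro ε hεI z hz hza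
      by_contra hbne
      have hwne : (![-(deriv (g1 ε) z), deriv (g0 ε) z] : Fin 2 → ℂ) ≠ 0 := by
        intro h
        exact hbne (by simpa using congrFun h 1)
      have hmem : (ε, z) ∈ I' ×ˢ B' := ⟨hεI, hz.1⟩
      have hrep : (H ε z).rep 0 ≠ 0 := (hIB hmem).1
      rw [hHeq ε z hz.2 hwne, rep_coord_ne] at hrep
      exact hrep (by simpa using hza)
    have hnc0 : ¬ ∃ c : ℂ × ℂ, ∀ z ∈ U, (g1 0 z, g0 0 z) = c := by
      rintro ⟨c, hc⟩
      refine hnc 0 ⟨(c.2, c.1), fun z hz => ?_⟩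
      have := hc z hz
      rw [Prod.ext_iff] at this ⊢
      exact ⟨this.2, this.1⟩
    have hkey := key U hU hUc h0U g1 g0 hol1 (hol0 0) hnc0
      (hTLU g1 ((continuous_snd.comp_continuousOn hcont)))
      hcrit.2 I' B' hI' hB' himp hδ
    filter_upwards [hkey] with ε hε
    obtain ⟨z, hzU, hzδ, h1, h2⟩ := hε
    exact ⟨z, hzU, hzδ, h2, h1⟩
  · -- i = 1 : use a := g0, b := g1
    have himp : ∀ ε ∈ I', ∀ z ∈ B' ∩ U, deriv (g0 ε) z = 0 → deriv (g1 ε) z = 0 := by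
      intro ε hεI z hz hza
      by_contra hbne
      have hwne : (![-(deriv (g1 ε) z), deriv (g0 ε) z] : Fin 2 → ℂ) ≠ 0 := by
        intro h
        have := congrFun h 0
        simp at this
        exact hbne this
      have hmem : (ε, z) ∈ I' ×ˢ B' := ⟨hεI, hz.1⟩
      have hrep : (H ε z).rep 1 ≠ 0 := (hIB hmem).1
      rw [hHeq ε z hz.2 hwne, rep_coord_ne] at hrep
      exact hrep (by simpa using hza)
    exact key U hU hUc h0U g0 g1 hol0 (hol1 0) (hnc 0)
      (hTLU g0 ((continuous_fst.comp_continuousOn hcont)))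
      hcrit.1 I' B' hI' hB' himp hδ
end

section
/- Let M be a connected complex manifold (or connected open subset of ℂ), let Q ⊆ ℂ^m be compact, and let f : M × Q → ℂ be continuous with f_p = f(·,p) holomorphic and nonconstant for every p ∈ Q. Then there exist finitely many distinct points x_1,…,x_n ∈ M such that for every p ∈ Q, the function f_p is nonconstant on the finite set {x_1,…,x_n}. -/
/-- let `M ⊆ ℂ` be open and connected, `Q ⊆ ℂᵐ` compact, and
`f : M × Q → ℂ` continuous with `f_p = f(·, p)` holomorphic and nonconstant on `M`
for every `p ∈ Q`.  Then there are finitely many distinct points `x₁, …, x_n ∈ M`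
such that for every `p ∈ Q` the function `f_p` is nonconstant on `{x₁, …, x_n}`. -/
theorem nonconstancy_at_finitely_many_points (M : Set ℂ) (hM : IsOpen M)
    (hMc : IsConnected M) (m : ℕ) (Q : Set (Fin m → ℂ)) (hQ : IsCompact Q)
    (f : ℂ → (Fin m → ℂ) → ℂ)
    (hcont : ContinuousOn (fun q : ℂ × (Fin m → ℂ) => f q.1 q.2) (M ×ˢ Q))
    (hhol : ∀ p ∈ Q, DifferentiableOn ℂ (fun z => f z p) M)
    (hnc : ∀ p ∈ Q, ¬ ∃ c : ℂ, ∀ z ∈ M, f z p = c) :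
    ∃ (n : ℕ) (x : Fin n → ℂ), (∀ i, x i ∈ M) ∧ Function.Injective x ∧
      ∀ p ∈ Q, ∃ i j : Fin n, f (x i) p ≠ f (x j) p := by
  obtain ⟨z₀, hz₀⟩ := hMc.nonempty
  -- for each p, a point where f · p differs from f z₀ p
  have key : ∀ p : Q, ∃ x ∈ M, f x (p : Fin m → ℂ) ≠ f z₀ (p : Fin m → ℂ) := by
    intro ⟨p, hp⟩
    by_contra h
    push_neg at h
    exact hnc p hp ⟨f z₀ p, fun z hz => h z hz⟩
  choose xp hxpM hxpne using key
  haveI : CompactSpace Q := isCompact_iff_compactSpace.mp hQ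
  -- continuity of q ↦ f a q on Q (as subtype), for a ∈ M
  have hc : ∀ a ∈ M, Continuous fun q : Q => f a (q : Fin m → ℂ) := by
    intro a ha
    have : ContinuousOn (fun q : Fin m → ℂ => f a q) Q := by
      have := hcont.comp (f := fun q : Fin m → ℂ => ((a, q) : ℂ × (Fin m → ℂ)))
        (continuous_const.prodMk continuous_id).continuousOn
        (fun q hq => Set.mk_mem_prod ha hq)
      exact this
    exact this.restrict
  set W : Q → Set Q := fun p => {q : Q | f (xp p) (q : Fin m → ℂ) ≠ f z₀ (q : Fin m → ℂ)}
    with hW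
  have hWopen : ∀ p, IsOpen (W p) := by
    intro p
    have : W p = (fun q : Q => f (xp p) (q : Fin m → ℂ) - f z₀ (q : Fin m → ℂ)) ⁻¹' {0}ᶜ := by
      ext q; simp [hW, sub_eq_zero]
    rw [this]
    exact (isOpen_compl_singleton).preimage (((hc _ (hxpM p)).sub (hc _ hz₀)))
  have hcover : (Set.univ : Set Q) ⊆ ⋃ p, W p := by
    intro q _
    exact Set.mem_iUnion.mpr ⟨q, hxpne q⟩
  obtain ⟨t, ht⟩ := isCompact_univ.elim_finite_subcover W hWopen hcover
  classical
  set S : Finset ℂ := insert z₀ (t.image xp) with hS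
  refine ⟨S.card, fun i => ((S.equivFin.symm i : S) : ℂ), ?_, ?_, ?_⟩
  · intro i
    have hmem : (((S.equivFin.symm i : S)) : ℂ) ∈ S := (S.equivFin.symm i).2
    simp only []
    rcases Finset.mem_insert.mp hmem with h | h
    · rw [h]; exact hz₀
    · obtain ⟨p, _, hp⟩ := Finset.mem_image.mp h
      rw [← hp]; exact hxpM p
  · intro i j hij
    exact S.equivFin.symm.injective (Subtype.ext hij)
  · intro p hp
    have : (⟨p, hp⟩ : Q) ∈ ⋃ p' ∈ t, W p' := ht (Set.mem_univ _)
    obtain ⟨p', hp't, hpW⟩ := Set.mem_iUnion₂.mp this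
    have h1 : xp p' ∈ S := Finset.mem_insert_of_mem (Finset.mem_image_of_mem xp hp't)
    have h2 : z₀ ∈ S := Finset.mem_insert_self _ _
    refine ⟨S.equivFin ⟨xp p', h1⟩, S.equivFin ⟨z₀, h2⟩, ?_⟩
    simpa [hW] using hpW
end

section
/- Let M be a connected Riemann surface, n ≥ 1, z⁰ a point, and let f = (z⁰, [h_0 : ⋯ : h_n]) : M → {z⁰} × ℂℙ^n be a nondegenerate vertical holomorphic map. Then any holomorphic map into ℂℙ^n sufficiently uniformly close to [h_0 : ⋯ : h_n] on a compact set K ⊆ M with nonempty interior is also nondegenerate. -/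
/-- Remark 6.5: nondegeneracy is an open condition.  Let `M ⊆ ℂ` be open
and connected, let `h : M → ℂ^{n+1} \ {0}` be holomorphic and nondegenerate (the image
of its projectivization lies in no proper projective linear subspace of `ℂℙⁿ`,
equivalently the image of `h` lies in no proper linear subspace), and let `K ⊆ M` be
compact with nonempty interior.  Then there is `ε > 0` such that every holomorphic
nonvanishing map `g : M → ℂ^{n+1}` that is uniformly `ε`-close to `h` on `K` is also
nondegenerate. -/
theorem nondegenerate_is_open (M : Set ℂ) (hM : IsOpen M) (hMc : IsConnected M)
    (n : ℕ) (hn : 1 ≤ n) (K : Set ℂ) (hK : IsCompact K) (hKM : K ⊆ M)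
    (hKint : (interior K).Nonempty) (h : ℂ → (Fin (n + 1) → ℂ))
    (hhol : DifferentiableOn ℂ h M) (hne : ∀ z ∈ M, h z ≠ 0)
    (hnondeg : ∀ S : Submodule ℂ (Fin (n + 1) → ℂ), (∀ z ∈ M, h z ∈ S) → S = ⊤) :
    ∃ ε > 0, ∀ g : ℂ → (Fin (n + 1) → ℂ),
      DifferentiableOn ℂ g M → (∀ z ∈ M, g z ≠ 0) →
      (∀ z ∈ K, ‖g z - h z‖ < ε) →
      ∀ S : Submodule ℂ (Fin (n + 1) → ℂ), (∀ z ∈ M, g z ∈ S) → S = ⊤ := by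
  set U : Set ℂ := interior K with hUdef
  have hUopen : IsOpen U := isOpen_interior
  have hUM : U ⊆ M := interior_subset.trans hKM
  obtain ⟨z₀, hz₀⟩ := hKint
  -- Step 1: span of h '' U is everything
  have hspan : Submodule.span ℂ (h '' U) = ⊤ := by
    apply hnondeg
    intro z hz
    by_contra hzS
    obtain ⟨φ, hφx, hφbot⟩ :=
      Submodule.exists_dual_map_eq_bot_of_notMem hzS inferInstance
    -- φ ∘ h is analytic on M and vanishes on the open set U
    have hφcont : Continuous φ := LinearMap.continuous_of_finiteDimensional φ
    have hana : AnalyticOnNhd ℂ (fun w => φ (h w)) M := by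
      have : DifferentiableOn ℂ (fun w => φ (h w)) M :=
        (LinearMap.toContinuousLinearMap φ).differentiable.comp_differentiableOn hhol
      exact this.analyticOnNhd hM
    have hz0U : ∀ w ∈ U, φ (h w) = 0 := by
      intro w hw
      have : h w ∈ Submodule.span ℂ (h '' U) :=
        Submodule.subset_span ⟨w, hw, rfl⟩
      have : φ (h w) ∈ (Submodule.span ℂ (h '' U)).map φ :=
        Submodule.mem_map_of_mem this
      rwa [hφbot, Submodule.mem_bot] at this
    have hev : (fun w => φ (h w)) =ᶠ[nhds z₀] 0 := by
      filter_upwards [hUopen.mem_nhds hz₀] with w hw using hz0U w hw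
    have := hana.eqOn_zero_of_preconnected_of_eventuallyEq_zero
      hMc.isPreconnected (hUM hz₀) hev hz
    exact hφx this
  -- Step 2: extract a linearly independent family h (z i), z i ∈ U
  obtain ⟨b, hbsub, hbspan, hbind⟩ := exists_linearIndependent ℂ (h '' U)
  rw [hspan] at hbspan
  have hbfin : b.Finite := hbind.setFinite
  haveI : Fintype b := hbfin.fintype
  have hcard : Fintype.card b = n + 1 := by
    have := finrank_span_set_eq_card hbind
    rw [hbspan] at this
    simp [Module.finrank_fintype_fun_eq_card] at this
    rw [Set.ncard_eq_toFinset_card', Set.toFinset_card] at this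
    omega
  obtain ⟨e⟩ : Nonempty (Fin (n + 1) ≃ b) :=
    ⟨(Fintype.equivFinOfCardEq hcard).symm⟩
  have hchoice : ∀ i : Fin (n + 1), ∃ w ∈ U, h w = (e i : Fin (n + 1) → ℂ) := by
    intro i
    obtain ⟨w, hw, hweq⟩ := hbsub (e i).2
    exact ⟨w, hw, hweq⟩
  choose z hzU hzeq using hchoice
  have hvind : LinearIndependent ℂ (fun i => h (z i)) := by
    have : (fun i => h (z i)) = (fun x : b => (x : Fin (n + 1) → ℂ)) ∘ e := by
      funext i; exact hzeq i
    rw [this]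
    exact hbind.comp e e.injective
  -- Step 3: openness of linear independence
  have hopen : IsOpen {f : Fin (n + 1) → (Fin (n + 1) → ℂ) | LinearIndependent ℂ f} :=
    isOpen_setOf_linearIndependent
  obtain ⟨ε, hεpos, hball⟩ := Metric.isOpen_iff.1 hopen _ hvind
  refine ⟨ε, hεpos, fun g hg hgne hgclose S hS => ?_⟩
  have hwind : LinearIndependent ℂ (fun i => g (z i)) := by
    apply hball
    rw [Metric.mem_ball, dist_pi_lt_iff hεpos]
    intro i
    rw [dist_eq_norm]
    exact hgclose (z i) (interior_subset (hzU i))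
  have hspanw : Submodule.span ℂ (Set.range fun i => g (z i)) = ⊤ := by
    apply hwind.span_eq_top_of_card_eq_finrank
    simp [Module.finrank_fintype_fun_eq_card]
  rw [← top_le_iff, ← hspanw]
  rw [Submodule.span_le]
  rintro - ⟨i, rfl⟩
  exact hS (z i) (hUM (hzU i))
end

section
/- Let E be a topological space that is the increasing union of second-countable metrisable subspaces E_1 ⊆ E_2 ⊆ ⋯ with continuous inclusions, endowed with the colimit topology, such that E is Hausdorff, and such that a sequence converges in E iff it lies in some E_k together with its limit and converges there. If L ⊆ E is sequentially compact and L ⊄ E_k for every k, then a contradiction arises: there is a sequence x_k ∈ L \ E_k with no subsequence converging in E. Hence every sequentially compact subset L of E is contained in some E_k. -/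
open Filter Topology

/-- first half of Proposition 7.4: let `E` be a Hausdorff topological
space which is the colimit of an increasing sequence of second-countable metrisable
spaces `X k` with continuous injective inclusions `j k : X k → E` (compatible with
continuous injective bonding maps `i k : X k → X (k+1)`), such that a sequence
converges in `E` iff it lies in some `X k` together with its limit and converges
there.  Then every sequentially compact subset `L` of `E` is contained in (the image
of) some `X k`. -/
theorem silva_seq_compact_subset_of_step
    (X : ℕ → Type*) [∀ k, TopologicalSpace (X k)]
    [∀ k, SecondCountableTopology (X k)] [∀ k, TopologicalSpace.MetrizableSpace (X k)]
    (E : Type*) [TopologicalSpace E] [T2Space E]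
    (i : ∀ k, X k → X (k + 1)) (hi : ∀ k, Continuous (i k))
    (hiinj : ∀ k, Function.Injective (i k))
    (j : ∀ k, X k → E) (hj : ∀ k, Continuous (j k))
    (hjinj : ∀ k, Function.Injective (j k))
    (hcompat : ∀ k (x : X k), j (k + 1) (i k x) = j k x)
    (hunion : ∀ e : E, ∃ k, ∃ x : X k, j k x = e)
    (hseq : ∀ (u : ℕ → E) (a : E),
      Tendsto u atTop (nhds a) ↔
        ∃ k, ∃ v : ℕ → X k, ∃ b : X k, (∀ n, j k (v n) = u n) ∧ j k b = a ∧
          Tendsto v atTop (nhds b))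
    (L : Set E)
    (hL : ∀ u : ℕ → E, (∀ n, u n ∈ L) → ∃ a ∈ L, ∃ φ : ℕ → ℕ,
      StrictMono φ ∧ Tendsto (u ∘ φ) atTop (nhds a)) :
    ∃ k, L ⊆ Set.range (j k) := by
  have hmono : ∀ k l, k ≤ l → Set.range (j k) ⊆ Set.range (j l) := by
    intro k l hkl
    induction l, hkl using Nat.le_induction with
    | base => exact subset_rfl
    | succ l hl ih =>
      refine ih.trans ?_
      rintro _ ⟨x, rfl⟩
      exact ⟨i l x, hcompat l x⟩
  by_contra h
  push_neg at h
  have h' : ∀ k, ∃ x ∈ L, x ∉ Set.range (j k) := by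
    intro k
    obtain ⟨x, hx, hx'⟩ := Set.not_subset.mp (h k)
    exact ⟨x, hx, hx'⟩
  choose u hu hnot using h'
  obtain ⟨a, _, φ, hφ, htend⟩ := hL u hu
  obtain ⟨k, v, b, hv, -, -⟩ := (hseq (u ∘ φ) a).mp htend
  exact hnot (φ k) (hmono k (φ k) (hφ.id_le k) ⟨v k, hv k⟩)
end

section
/- Let E = colim E_k be as in the previous statement, and suppose additionally that each E_k is the increasing union of open sets V_1^k ⊆ V_2^k ⊆ ⋯ with V_j^k relatively compact in E_{k+1} and V_j^k ⊆ V_j^{k+1}. If L ⊆ E_1 is sequentially compact in E, then L is closed in each E_k, and L is compact in E_k for all sufficiently large k. -/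
open Filter Topology

/-- Transition map `X k → X k'` obtained by iterating the inclusions `i`. -/
def silvaTrans {X : ℕ → Type*} (i : ∀ k, X k → X (k + 1)) {k k' : ℕ} (h : k ≤ k')
    (x : X k) : X k' :=
  Nat.leRecOn h (fun {n} => i n) x

theorem silvaTrans_succ {X : ℕ → Type*} (i : ∀ k, X k → X (k + 1)) {k k' : ℕ}
    (h : k ≤ k') (h2 : k ≤ k' + 1) (x : X k) :
    silvaTrans i h2 x = i k' (silvaTrans i h x) :=
  Nat.leRecOn_succ h x

theorem silvaTrans_j {X : ℕ → Type*} {E : Type*} (i : ∀ k, X k → X (k + 1))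
    (j : ∀ k, X k → E) (hcompat : ∀ k (x : X k), j (k + 1) (i k x) = j k x)
    {k k' : ℕ} (h : k ≤ k') (x : X k) : j k' (silvaTrans i h x) = j k x := by
  induction k', h using Nat.le_induction with
  | base => rw [silvaTrans]; rw [Nat.leRecOn_self]
  | succ k' h ih => rw [silvaTrans_succ i h, hcompat, ih]

theorem silvaTrans_continuous {X : ℕ → Type*} [∀ k, TopologicalSpace (X k)]
    (i : ∀ k, X k → X (k + 1)) (hi : ∀ k, Continuous (i k)) {k k' : ℕ} (h : k ≤ k') :
    Continuous (silvaTrans i h : X k → X k') := by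
  induction k', h using Nat.le_induction with
  | base =>
    have : (silvaTrans i le_rfl : X k → X k) = id := by
      funext x; exact Nat.leRecOn_self x
    rw [this]; exact continuous_id
  | succ k' h ih =>
    have : (silvaTrans i (Nat.le_succ_of_le h) : X k → X (k' + 1))
        = i k' ∘ silvaTrans i h := by
      funext x; exact silvaTrans_succ i h _ x
    rw [this]; exact (hi k').comp ih

theorem silvaTrans_V {X : ℕ → Type*} (i : ∀ k, X k → X (k + 1))
    (V : ∀ k : ℕ, ℕ → Set (X k)) (hVstep : ∀ k m, i k '' V k m ⊆ V (k + 1) m)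
    {k k' : ℕ} (h : k ≤ k') (m : ℕ) {x : X k} (hx : x ∈ V k m) :
    silvaTrans i h x ∈ V k' m := by
  induction k', h using Nat.le_induction with
  | base => rw [silvaTrans, Nat.leRecOn_self]; exact hx
  | succ k' h ih =>
    rw [silvaTrans_succ i h]
    exact hVstep k' m ⟨_, ih, rfl⟩

theorem V_mono {X : ℕ → Type*} (V : ∀ k : ℕ, ℕ → Set (X k))
    (hVmono : ∀ k m, V k m ⊆ V k (m + 1)) (k : ℕ) {m m' : ℕ} (h : m ≤ m') :
    V k m ⊆ V k m' := by
  induction m', h using Nat.le_induction with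
  | base => exact le_rfl
  | succ m' h ih => exact ih.trans (hVmono k m')

/-- Proposition 7.4: let `E = colim X k` be a Silva space as in
Statement 15, and assume in addition that each `X k` is the increasing union of open
sets `V k 1 ⊆ V k 2 ⊆ ⋯` whose images in `X (k+1)` are relatively compact and satisfy
`V k j ⊆ V (k+1) j` (via the inclusion).  If `L` is a subset of (the image of) `X 0`
that is sequentially compact in `E`, then `L` is closed in each `X k` and compact in
`X k` for all sufficiently large `k`. -/
theorem silva_seq_compact_is_compact_in_step
    (X : ℕ → Type*) [∀ k, TopologicalSpace (X k)]
    [∀ k, SecondCountableTopology (X k)] [∀ k, TopologicalSpace.MetrizableSpace (X k)]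
    (E : Type*) [TopologicalSpace E] [T2Space E]
    (i : ∀ k, X k → X (k + 1)) (hi : ∀ k, Continuous (i k))
    (hiinj : ∀ k, Function.Injective (i k))
    (j : ∀ k, X k → E) (hj : ∀ k, Continuous (j k))
    (hjinj : ∀ k, Function.Injective (j k))
    (hcompat : ∀ k (x : X k), j (k + 1) (i k x) = j k x)
    (hunion : ∀ e : E, ∃ k, ∃ x : X k, j k x = e)
    (hseq : ∀ (u : ℕ → E) (a : E),
      Tendsto u atTop (nhds a) ↔
        ∃ k, ∃ v : ℕ → X k, ∃ b : X k, (∀ n, j k (v n) = u n) ∧ j k b = a ∧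
          Tendsto v atTop (nhds b))
    (V : ∀ k : ℕ, ℕ → Set (X k))
    (hVopen : ∀ k m, IsOpen (V k m))
    (hVmono : ∀ k m, V k m ⊆ V k (m + 1))
    (hVcover : ∀ k, (⋃ m, V k m) = Set.univ)
    (hVrel : ∀ k m, IsCompact (closure (i k '' V k m)))
    (hVstep : ∀ k m, i k '' V k m ⊆ V (k + 1) m)
    (L : Set E) (hL0 : L ⊆ Set.range (j 0))
    (hL : ∀ u : ℕ → E, (∀ n, u n ∈ L) → ∃ a ∈ L, ∃ φ : ℕ → ℕ,
      StrictMono φ ∧ Tendsto (u ∘ φ) atTop (nhds a)) :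
    (∀ k, IsClosed (j k ⁻¹' L)) ∧ ∃ K : ℕ, ∀ k ≥ K, IsCompact (j k ⁻¹' L) := by
  -- Part 1 : closedness
  have hclosed : ∀ k, IsClosed (j k ⁻¹' L) := by
    intro k
    apply IsSeqClosed.isClosed
    intro v b hv hvb
    obtain ⟨a, haL, φ, hφ, hconv⟩ := hL (fun n => j k (v n)) hv
    have h1 : Tendsto (fun n => j k (v (φ n))) atTop (nhds (j k b)) :=
      ((hj k).continuousAt.tendsto).comp (hvb.comp hφ.tendsto_atTop)
    have : a = j k b := tendsto_nhds_unique hconv h1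
    exact Set.mem_preimage.2 (this ▸ haL)
  refine ⟨hclosed, ?_⟩
  -- Key claim: the trace of L is eventually contained in some V k m.
  have key : ∃ k m, ∀ x : X 0, j 0 x ∈ L → silvaTrans i (Nat.zero_le k) x ∈ V k m := by
    by_contra hcon
    push_neg at hcon
    choose x hxL hxV using fun n => hcon n n
    obtain ⟨a, haL, φ, hφ, hconv⟩ := hL (fun n => j 0 (x n)) hxL
    rw [hseq] at hconv
    obtain ⟨k, v, b, hvj, hba, hvb⟩ := hconv
    -- identify v n with the image of x (φ n)
    have hv : ∀ n, v n = silvaTrans i (Nat.zero_le k) (x (φ n)) := by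
      intro n
      apply hjinj k
      rw [hvj n, silvaTrans_j i j hcompat]; rfl
    -- b lies in some V k M
    have hb : b ∈ ⋃ m, V k m := (hVcover k) ▸ Set.mem_univ b
    obtain ⟨M, hM⟩ := Set.mem_iUnion.1 hb
    have hev : ∀ᶠ n in atTop, v n ∈ V k M :=
      hvb.eventually ((hVopen k M).eventually_mem hM)
    obtain ⟨N, hN⟩ := eventually_atTop.1 hev
    set n := max N (max k M) with hn
    have h1 : v n ∈ V k M := hN n (le_max_left _ _)
    have hk : k ≤ φ n :=
      le_trans ((le_max_left k M).trans (le_max_right N _)) hφ.le_apply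
    have hMn : M ≤ φ n :=
      le_trans ((le_max_right k M).trans (le_max_right N _)) hφ.le_apply
    have h2 : silvaTrans i hk (v n) ∈ V (φ n) M := silvaTrans_V i V hVstep hk M h1
    have h3 : silvaTrans i hk (v n) = silvaTrans i (Nat.zero_le (φ n)) (x (φ n)) := by
      apply hjinj (φ n)
      rw [silvaTrans_j i j hcompat, silvaTrans_j i j hcompat, hv,
        silvaTrans_j i j hcompat]
    rw [h3] at h2
    exact hxV (φ n) (V_mono V hVmono (φ n) hMn h2)
  obtain ⟨k, m, hkm⟩ := key
  -- compactness at level k+1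
  have hcpt : IsCompact (j (k + 1) ⁻¹' L) := by
    apply (hVrel k m).of_isClosed_subset (hclosed (k + 1))
    intro y hy
    obtain ⟨x0, hx0⟩ := hL0 hy
    have hy' : y = i k (silvaTrans i (Nat.zero_le k) x0) := by
      apply hjinj (k + 1)
      rw [hcompat, silvaTrans_j i j hcompat, hx0]
    have hx0L : j 0 x0 ∈ L := hx0 ▸ hy
    refine subset_closure ?_
    exact hy' ▸ ⟨_, hkm x0 hx0L, rfl⟩
  refine ⟨k + 1, fun k' hk' => ?_⟩
  -- preimage at level k' is the image of the compact preimage at level k+1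
  have himg : j k' ⁻¹' L = silvaTrans i hk' '' (j (k + 1) ⁻¹' L) := by
    ext y
    constructor
    · intro hy
      obtain ⟨x0, hx0⟩ := hL0 hy
      refine ⟨i k (silvaTrans i (Nat.zero_le k) x0), ?_, ?_⟩
      · show j (k + 1) _ ∈ L
        rw [hcompat, silvaTrans_j i j hcompat, hx0]; exact hy
      · apply hjinj k'
        rw [silvaTrans_j i j hcompat, hcompat, silvaTrans_j i j hcompat, hx0]
    · rintro ⟨z, hz, rfl⟩
      show j k' _ ∈ L
      rw [silvaTrans_j i j hcompat]
      exact hz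
  rw [himg]
  exact hcpt.image (silvaTrans_continuous i hi hk')
end

section
/- Let K be a sequentially compact, first-countable topological space, let E = colim E_k be a Silva space as above with each E_k metrisable and E Hausdorff, and let f : K → E be continuous. Then there exist k ≥ 1 and a continuous map g : K → E_k with f = j_k ∘ g, where j_k : E_k → E is the inclusion. -/
open Filter Topology

/-- Proposition 7.1, abstract form: let `K` be a sequentially compact,
first-countable topological space, let `E = colim X k` be a Silva space as in
Statements 15–16, and let `f : K → E` be continuous.  Then there are `k` and a
continuous map `g : K → X k` such that `f = j k ∘ g`. -/
theorem silva_map_from_compact_factors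
    (K : Type*) [TopologicalSpace K] [FirstCountableTopology K]
    (hKseq : ∀ u : ℕ → K, ∃ a : K, ∃ φ : ℕ → ℕ,
      StrictMono φ ∧ Tendsto (u ∘ φ) atTop (nhds a))
    (X : ℕ → Type*) [∀ k, TopologicalSpace (X k)]
    [∀ k, SecondCountableTopology (X k)] [∀ k, TopologicalSpace.MetrizableSpace (X k)]
    (E : Type*) [TopologicalSpace E] [T2Space E]
    (i : ∀ k, X k → X (k + 1)) (hi : ∀ k, Continuous (i k))
    (hiinj : ∀ k, Function.Injective (i k))
    (j : ∀ k, X k → E) (hj : ∀ k, Continuous (j k))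
    (hjinj : ∀ k, Function.Injective (j k))
    (hcompat : ∀ k (x : X k), j (k + 1) (i k x) = j k x)
    (hunion : ∀ e : E, ∃ k, ∃ x : X k, j k x = e)
    (hseq : ∀ (u : ℕ → E) (a : E),
      Tendsto u atTop (nhds a) ↔
        ∃ k, ∃ v : ℕ → X k, ∃ b : X k, (∀ n, j k (v n) = u n) ∧ j k b = a ∧
          Tendsto v atTop (nhds b))
    (V : ∀ k : ℕ, ℕ → Set (X k))
    (hVopen : ∀ k m, IsOpen (V k m))
    (hVmono : ∀ k m, V k m ⊆ V k (m + 1))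
    (hVcover : ∀ k, (⋃ m, V k m) = Set.univ)
    (hVrel : ∀ k m, IsCompact (closure (i k '' V k m)))
    (hVstep : ∀ k m, i k '' V k m ⊆ V (k + 1) m)
    (f : K → E) (hf : Continuous f) :
    ∃ k, ∃ g : K → X k, Continuous g ∧ f = (j k) ∘ g := by
  classical
  -- monotonicity of `V k` in the second index
  have hVmono' : ∀ k {m m' : ℕ}, m ≤ m' → V k m ⊆ V k m' := by
    intro k m m' h
    induction h with
    | refl => exact subset_rfl
    | step _ ih => exact ih.trans (hVmono _ _)
  -- pushing sets up the tower
  have hpush : ∀ m k d, j k '' V k m ⊆ j (k + d) '' V (k + d) m := by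
    intro m k d
    induction d with
    | zero => exact subset_rfl
    | succ d ih =>
      refine ih.trans ?_
      rintro e ⟨x, hx, rfl⟩
      exact ⟨i (k + d) x, hVstep _ _ ⟨x, hx, rfl⟩, hcompat _ _⟩
  have hpush' : ∀ {k k' m m' : ℕ}, k ≤ k' → m ≤ m' →
      j k '' V k m ⊆ j k' '' V k' m' := by
    intro k k' m m' hk hm
    have h1 : j k '' V k m ⊆ j k '' V k m' := Set.image_mono (hVmono' k hm)
    have h2 := hpush m' k (k' - k)
    rw [Nat.add_sub_cancel' hk] at h2
    exact h1.trans h2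
  -- Step 1: the image of `f` lands in `j N '' V N N` for some `N`.
  have key : ∃ N, ∀ x, f x ∈ j N '' V N N := by
    by_contra hcon
    push_neg at hcon
    choose u hu using hcon
    obtain ⟨a, φ, hφ, hlim⟩ := hKseq u
    have hflim : Tendsto (fun n => f (u (φ n))) atTop (nhds (f a)) :=
      (hf.tendsto a).comp hlim
    obtain ⟨k, v, b, hv, hb, hvb⟩ := (hseq _ _).mp hflim
    have hcpt : IsCompact (insert b (Set.range v)) := hvb.isCompact_insert_range
    have hsub : insert b (Set.range v) ⊆ ⋃ m, V k m := by
      rw [hVcover k]; exact Set.subset_univ _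
    obtain ⟨t, ht⟩ := hcpt.elim_finite_subcover (V k) (hVopen k) hsub
    obtain ⟨M, hMt⟩ := t.exists_le
    have hM : insert b (Set.range v) ⊆ V k M := by
      refine ht.trans ?_
      intro x hx
      simp only [Set.mem_iUnion] at hx
      obtain ⟨m, hm, hx⟩ := hx
      exact hVmono' k (hMt m hm) hx
    set n := max k M with hn
    have h1 : f (u (φ n)) ∈ j k '' V k M :=
      ⟨v n, hM (Set.mem_insert_of_mem _ ⟨n, rfl⟩), hv n⟩
    have h2 : f (u (φ n)) ∈ j (φ n) '' V (φ n) (φ n) := by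
      refine hpush' ?_ ?_ h1
      · exact le_trans (le_max_left _ _) (hφ.le_apply)
      · exact le_trans (le_max_right _ _) (hφ.le_apply)
    exact hu (φ n) h2
  obtain ⟨N, hN⟩ := key
  choose h hmemV hjh using hN
  -- Step 2: factor through the compact set `closure (i N '' V N N)` in `X (N+1)`.
  set C := closure (i N '' V N N) with hC
  have hCcpt : IsCompact C := hVrel N N
  have hmemC : ∀ x, i N (h x) ∈ C := fun x => subset_closure ⟨h x, hmemV x, rfl⟩
  haveI : CompactSpace C := isCompact_iff_compactSpace.mp hCcpt
  have hemb : IsClosedEmbedding (fun c : C => j (N + 1) c.1) := by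
    refine Continuous.isClosedEmbedding ((hj (N + 1)).comp continuous_subtype_val) ?_
    exact (hjinj (N + 1)).comp Subtype.val_injective
  have hg' : Continuous (fun x => (⟨i N (h x), hmemC x⟩ : C)) := by
    rw [hemb.toIsEmbedding.continuous_iff]
    have : ((fun c : C => j (N + 1) c.1) ∘ fun x => (⟨i N (h x), hmemC x⟩ : C)) = f := by
      funext x
      simp only [Function.comp_apply]
      rw [hcompat, hjh]
    rw [this]
    exact hf
  refine ⟨N + 1, fun x => i N (h x), ?_, ?_⟩
  · exact continuous_subtype_val.comp hg'
  · funext x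
    simp only [Function.comp_apply]
    rw [hcompat, hjh]
end
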